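/- Let X be a set and let 𝒜, ℬ be collections of subsets of X with ℬ Γ-like and ℬ ⊆ 𝒜. If Player I has no winning predetermined strategy in G_fin(𝒜,ℬ), then 𝒜 is almost-Γ-like. -/
import Mathlib


open Set

/-- A collection `𝒜` of subsets of `X` is Γ-like if every member is infinite
and every infinite subset of a member is itself a member. -/
def GammaLike {X : Type*} (𝒜 : Set (Set X)) : Prop :=
  ∀ A ∈ 𝒜, A.Infinite ∧ ∀ A' ⊆ A, A'.Infinite → A' ∈ 𝒜

/-- A collection `𝒜` is almost-Γ-like if each `A ∈ 𝒜` has a countably infinite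
subset `A'` all of whose cofinite subsets belong to `𝒜`. -/
def AlmostGammaLike {X : Type*} (𝒜 : Set (Set X)) : Prop :=
  ∀ A ∈ 𝒜, ∃ A' ⊆ A, A'.Countable ∧ A'.Infinite ∧
    ∀ A'' ⊆ A', (A' \ A'').Finite → A'' ∈ 𝒜

/-- `𝒜` is closed under finite unions. -/
def UnionClosed {X : Type*} (𝒜 : Set (Set X)) : Prop :=
  ∀ A ∈ 𝒜, ∀ B ∈ 𝒜, A ∪ B ∈ 𝒜

/-- α₁(𝒜,ℬ): for every sequence from 𝒜 there is `B ∈ ℬ` with `A n \ B` finite for all `n`. -/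
def Alpha1 {X : Type*} (𝒜 ℬ : Set (Set X)) : Prop :=
  ∀ A : ℕ → Set X, (∀ n, A n ∈ 𝒜) → ∃ B ∈ ℬ, ∀ n, (A n \ B).Finite

/-- α₂(𝒜,ℬ): for every sequence from 𝒜 there is `B ∈ ℬ` meeting each `A n` infinitely. -/
def Alpha2 {X : Type*} (𝒜 ℬ : Set (Set X)) : Prop :=
  ∀ A : ℕ → Set X, (∀ n, A n ∈ 𝒜) → ∃ B ∈ ℬ, ∀ n, (A n ∩ B).Infinite

/-- α₂'(𝒜,ℬ): for every sequence from 𝒜 there is `B ∈ ℬ` meeting each `A n`. -/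
def Alpha2' {X : Type*} (𝒜 ℬ : Set (Set X)) : Prop :=
  ∀ A : ℕ → Set X, (∀ n, A n ∈ 𝒜) → ∃ B ∈ ℬ, ∀ n, (A n ∩ B).Nonempty

/-- α₃(𝒜,ℬ): for every sequence from 𝒜 there is `B ∈ ℬ` meeting infinitely many `A n` infinitely. -/
def Alpha3 {X : Type*} (𝒜 ℬ : Set (Set X)) : Prop :=
  ∀ A : ℕ → Set X, (∀ n, A n ∈ 𝒜) → ∃ B ∈ ℬ, {n | (A n ∩ B).Infinite}.Infinite

/-- α₄(𝒜,ℬ): for every sequence from 𝒜 there is `B ∈ ℬ` meeting infinitely many `A n`. -/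
def Alpha4 {X : Type*} (𝒜 ℬ : Set (Set X)) : Prop :=
  ∀ A : ℕ → Set X, (∀ n, A n ∈ 𝒜) → ∃ B ∈ ℬ, {n | (A n ∩ B).Nonempty}.Infinite

/-- α_{1.1}(𝒜,ℬ): α₁ restricted to pairwise disjoint sequences. -/
def Alpha1p1 {X : Type*} (𝒜 ℬ : Set (Set X)) : Prop :=
  ∀ A : ℕ → Set X, (∀ n, A n ∈ 𝒜) → (∀ m n, m ≠ n → Disjoint (A m) (A n)) →
    ∃ B ∈ ℬ, ∀ n, (A n \ B).Finite

/-- α_{1.5}(𝒜,ℬ): for pairwise disjoint sequences from 𝒜 there is `B ∈ ℬ` with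
`A n \ B` finite for infinitely many `n`. -/
def Alpha1p5 {X : Type*} (𝒜 ℬ : Set (Set X)) : Prop :=
  ∀ A : ℕ → Set X, (∀ n, A n ∈ 𝒜) → (∀ m n, m ≠ n → Disjoint (A m) (A n)) →
    ∃ B ∈ ℬ, {n | (A n \ B).Finite}.Infinite

/-- α_{2.1}(𝒜,ℬ): α₂ restricted to pairwise disjoint sequences. -/
def Alpha2p1 {X : Type*} (𝒜 ℬ : Set (Set X)) : Prop :=
  ∀ A : ℕ → Set X, (∀ n, A n ∈ 𝒜) → (∀ m n, m ≠ n → Disjoint (A m) (A n)) →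
    ∃ B ∈ ℬ, ∀ n, (A n ∩ B).Infinite

/-- α_{3.1}(𝒜,ℬ): α₃ restricted to pairwise disjoint sequences. -/
def Alpha3p1 {X : Type*} (𝒜 ℬ : Set (Set X)) : Prop :=
  ∀ A : ℕ → Set X, (∀ n, A n ∈ 𝒜) → (∀ m n, m ≠ n → Disjoint (A m) (A n)) →
    ∃ B ∈ ℬ, {n | (A n ∩ B).Infinite}.Infinite

/-- α_{4.1}(𝒜,ℬ): α₄ restricted to pairwise disjoint sequences. -/
def Alpha4p1 {X : Type*} (𝒜 ℬ : Set (Set X)) : Prop :=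
  ∀ A : ℕ → Set X, (∀ n, A n ∈ 𝒜) → (∀ m n, m ≠ n → Disjoint (A m) (A n)) →
    ∃ B ∈ ℬ, {n | (A n ∩ B).Nonempty}.Infinite

/-- Player I has a winning predetermined strategy in G₁(𝒜,ℬ). -/
def PredWinG1 {X : Type*} (𝒜 ℬ : Set (Set X)) : Prop :=
  ∃ A : ℕ → Set X, (∀ n, A n ∈ 𝒜) ∧
    ∀ a : ℕ → X, (∀ n, a n ∈ A n) → Set.range a ∉ ℬ

/-- Player I has a winning predetermined strategy in G_fin(𝒜,ℬ). -/
def PredWinGfin {X : Type*} (𝒜 ℬ : Set (Set X)) : Prop :=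
  ∃ A : ℕ → Set X, (∀ n, A n ∈ 𝒜) ∧
    ∀ F : ℕ → Set X, (∀ n, (F n).Finite ∧ F n ⊆ A n) → (⋃ n, F n) ∉ ℬ

/-- Player I has a winning predetermined strategy in G_{<2}(𝒜,ℬ),
where II picks at most one point each round. -/
def PredWinGlt2 {X : Type*} (𝒜 ℬ : Set (Set X)) : Prop :=
  ∃ A : ℕ → Set X, (∀ n, A n ∈ 𝒜) ∧
    ∀ F : ℕ → Set X, (∀ n, (F n).Subsingleton ∧ F n ⊆ A n) → (⋃ n, F n) ∉ ℬ

/-- Player I has a winning predetermined strategy in G_cf(𝒜,ℬ),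
where II picks a cofinite subset each round. -/
def PredWinGcf {X : Type*} (𝒜 ℬ : Set (Set X)) : Prop :=
  ∃ A : ℕ → Set X, (∀ n, A n ∈ 𝒜) ∧
    ∀ B : ℕ → Set X, (∀ n, B n ⊆ A n ∧ (A n \ B n).Finite) → (⋃ n, B n) ∉ ℬ

/-- Player I has a winning perfect-information strategy in G₁(𝒜,ℬ):
a function from finite sequences of points of X into 𝒜 defeating all counterplays. -/
def WinG1 {X : Type*} (𝒜 ℬ : Set (Set X)) : Prop :=
  ∃ σ : List X → Set X, (∀ s, σ s ∈ 𝒜) ∧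
    ∀ a : ℕ → X, (∀ n, a n ∈ σ (List.ofFn fun i : Fin n => a i)) → Set.range a ∉ ℬ

/-- Player I has a winning perfect-information strategy in G_fin(𝒜,ℬ):
a function from finite sequences of finite subsets of X into 𝒜 defeating all counterplays. -/
def WinGfin {X : Type*} (𝒜 ℬ : Set (Set X)) : Prop :=
  ∃ σ : List (Set X) → Set X, (∀ s : List (Set X), (∀ F ∈ s, F.Finite) → σ s ∈ 𝒜) ∧
    ∀ F : ℕ → Set X,
      (∀ n, (F n).Finite ∧ F n ⊆ σ (List.ofFn fun i : Fin n => F i)) →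
      (⋃ n, F n) ∉ ℬ

/-- Player I has a winning perfect-information strategy in G_{<2}(𝒜,ℬ):
a function from finite sequences of at-most-singleton subsets of X into 𝒜
defeating all counterplays. -/
def WinGlt2 {X : Type*} (𝒜 ℬ : Set (Set X)) : Prop :=
  ∃ σ : List (Set X) → Set X, (∀ s : List (Set X), (∀ F ∈ s, F.Subsingleton) → σ s ∈ 𝒜) ∧
    ∀ F : ℕ → Set X,
      (∀ n, (F n).Subsingleton ∧ F n ⊆ σ (List.ofFn fun i : Fin n => F i)) →
      (⋃ n, F n) ∉ ℬ

/-- If ℬ is Γ-like, ℬ ⊆ 𝒜, and Player I has no winning predetermined strategy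
in G_fin(𝒜,ℬ), then 𝒜 is almost-Γ-like. -/
theorem stmt8 {X : Type*} (𝒜 ℬ : Set (Set X))
    (hB : GammaLike ℬ) (hBA : ℬ ⊆ 𝒜) (h : ¬ PredWinGfin 𝒜 ℬ) :
    AlmostGammaLike 𝒜 := by
  intro A hA
  rw [PredWinGfin] at h
  push_neg at h
  obtain ⟨F, hF, hB'⟩ := h (fun _ => A) (fun _ => hA)
  set B : Set X := ⋃ n, F n with hBdef
  have hBsub : B ⊆ A := iUnion_subset fun n => (hF n).2
  have hBcnt : B.Countable := countable_iUnion fun n => (hF n).1.countable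
  obtain ⟨hBinf, hBcl⟩ := hB B hB'
  exact ⟨B, hBsub, hBcnt, hBinf, fun A'' hsub hfin =>
    hBA (hBcl A'' hsub (fun hA'' => hBinf (by
      have : B ⊆ A'' ∪ (B \ A'') := fun x hx => by
        by_cases hx' : x ∈ A'' <;> simp [hx, hx']
      exact (hA''.union hfin).subset this)))⟩
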